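/- Suppose that for every probability distribution μ on subsets of [n] with max_i P_{A∼μ}[i ∈ A] ≤ p, two i.i.d. samples A, B from μ satisfy H(A ∪ B) ≥ c·H(A) for some constant c > 1. Then every union-closed family F ⊆ 2^[n] with |F| ≥ 2 has an element contained in more than a p-fraction of its sets. -/

import Mathlib

/-- Base-2 Shannon entropy of a distribution `μ` on a finite type. -/
noncomputable def ent {α : Type*} [Fintype α] (μ : α → ℝ) : ℝ :=
  ∑ x, -(μ x * Real.logb 2 (μ x))

/-- Distribution of `A ∪ B` for `A, B` i.i.d. with distribution `μ` on subsets of `[n]`. -/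
noncomputable def unionPush (n : ℕ) (μ : Finset (Fin n) → ℝ) (S : Finset (Fin n)) : ℝ :=
  ∑ T : Finset (Fin n), ∑ U : Finset (Fin n), if T ∪ U = S then μ T * μ U else 0

lemma ent_eq {α : Type*} [Fintype α] (μ : α → ℝ) :
    ent μ = (∑ x, Real.negMulLog (μ x)) / Real.log 2 := by
  unfold ent
  rw [Finset.sum_div]
  congr 1; ext x
  rw [Real.negMulLog, Real.logb]
  ring

lemma max_ent {α : Type*} [Fintype α] (F : Finset α) (hF : F.Nonempty)
    (ν : α → ℝ) (hnn : ∀ x, 0 ≤ ν x) (hsum : ∑ x, ν x = 1)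
    (hsupp : ∀ x ∉ F, ν x = 0) : ent ν ≤ Real.logb 2 F.card := by
  have hN : (0:ℝ) < F.card := by exact_mod_cast Finset.card_pos.mpr hF
  set N : ℝ := (F.card : ℝ) with hNdef
  have hsumF : ∑ x ∈ F, ν x = 1 := by
    rw [← hsum]
    exact Finset.sum_subset (Finset.subset_univ F) (fun x _ hx => hsupp x hx)
  have key : ∑ x ∈ F, N⁻¹ • Real.negMulLog (N * ν x)
      ≤ Real.negMulLog (∑ x ∈ F, N⁻¹ • (N * ν x)) := by
    apply Real.concaveOn_negMulLog.le_map_sum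
    · intro i _; positivity
    · simp [Finset.sum_const, hNdef, hN.ne']
      rw [← hNdef]; exact mul_inv_cancel₀ hN.ne'
    · intro i _; exact Set.mem_Ici.mpr (mul_nonneg hN.le (hnn i))
  have h1 : ∑ x ∈ F, N⁻¹ • (N * ν x) = 1 := by
    rw [← hsumF]
    congr 1; ext x
    field_simp
    rw [smul_eq_mul, one_div, ← mul_assoc, inv_mul_cancel₀ hN.ne', one_mul]
  rw [h1, Real.negMulLog_one] at key
  have h2 : ∀ x ∈ F, N⁻¹ • Real.negMulLog (N * ν x)
      = N⁻¹ * (ν x * Real.negMulLog N) + Real.negMulLog (ν x) := by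
    intro x _
    rw [Real.negMulLog_mul, smul_eq_mul]
    field_simp
  rw [Finset.sum_congr rfl h2, Finset.sum_add_distrib, ← Finset.mul_sum,
    ← Finset.sum_mul, hsumF] at key
  have h3 : ∑ x ∈ F, Real.negMulLog (ν x) ≤ Real.log N := by
    have : N⁻¹ * (1 * Real.negMulLog N) = - Real.log N := by
      rw [Real.negMulLog]; field_simp
    linarith [key, this.symm ▸ key]
  have h4 : ∑ x, Real.negMulLog (ν x) = ∑ x ∈ F, Real.negMulLog (ν x) := by
    apply (Finset.sum_subset (Finset.subset_univ F) _).symm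
    intro x _ hx; rw [hsupp x hx, Real.negMulLog_zero]
  rw [ent_eq, h4, Real.logb]
  exact div_le_div_of_nonneg_right h3 (Real.log_pos one_lt_two).le

/-- Suppose that for every probability distribution `μ` on subsets of `[n]` with
`max_i P[i ∈ A] ≤ p`, two i.i.d. samples `A, B ∼ μ` satisfy `H(A ∪ B) ≥ c·H(A)` with
`c > 1`. Then every union-closed family `F` with `|F| ≥ 2` has an element contained in
more than a `p`-fraction of its sets. -/
theorem stmt17 (n : ℕ) (p c : ℝ) (hc : 1 < c)
    (h : ∀ μ : Finset (Fin n) → ℝ, (∀ S, 0 ≤ μ S) → (∑ S, μ S) = 1 →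
      (∀ i : Fin n, (∑ S ∈ Finset.univ.filter (fun S : Finset (Fin n) => i ∈ S), μ S) ≤ p) →
      c * ent μ ≤ ent (unionPush n μ)) :
    ∀ F : Finset (Finset (Fin n)), (∀ A ∈ F, ∀ B ∈ F, A ∪ B ∈ F) → 2 ≤ F.card →
      ∃ i : Fin n, p * (F.card : ℝ) < ((F.filter (fun S => i ∈ S)).card : ℝ) := by
  intro F hUC hcard
  by_contra hno
  push_neg at hno
  have hN2 : (2:ℝ) ≤ (F.card : ℝ) := by exact_mod_cast hcard
  have hN : (0:ℝ) < (F.card : ℝ) := by linarith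
  set N : ℝ := (F.card : ℝ) with hNdef
  set μ : Finset (Fin n) → ℝ := fun S => if S ∈ F then N⁻¹ else 0 with hμ
  have hnn : ∀ S, 0 ≤ μ S := by
    intro S; simp only [hμ]; split <;> positivity
  have hsum : ∑ S, μ S = 1 := by
    simp only [hμ, Finset.sum_ite_mem, Finset.univ_inter, Finset.sum_const,
      nsmul_eq_mul]
    field_simp
    exact hNdef.symm
  have hmarg : ∀ i : Fin n,
      (∑ S ∈ Finset.univ.filter (fun S : Finset (Fin n) => i ∈ S), μ S) ≤ p := by
    intro i
    have : (∑ S ∈ Finset.univ.filter (fun S : Finset (Fin n) => i ∈ S), μ S)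
        = ((F.filter (fun S => i ∈ S)).card : ℝ) * N⁻¹ := by
      simp only [hμ, Finset.sum_ite_mem, Finset.sum_const, nsmul_eq_mul]
      congr 2
      · congr 1
        ext S
        simp [and_comm]
    rw [this]
    rw [inv_eq_one_div, ← div_eq_mul_one_div, div_le_iff₀ hN]
    linarith [hno i]
  have hFne : F.Nonempty := Finset.card_pos.mp (by omega)
  -- entropy of μ
  have hentμ : ent μ = Real.logb 2 N := by
    unfold ent
    have : ∀ x : Finset (Fin n), -(μ x * Real.logb 2 (μ x))
        = if x ∈ F then N⁻¹ * Real.logb 2 N else 0 := by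
      intro x
      simp only [hμ]
      split
      · rw [Real.logb_inv]; ring
      · simp
    rw [Finset.sum_congr rfl (fun x _ => this x)]
    simp only [Finset.sum_ite_mem, Finset.univ_inter, Finset.sum_const, nsmul_eq_mul]
    field_simp
    rw [← hNdef]
  -- unionPush properties
  have hunn : ∀ S, 0 ≤ unionPush n μ S := by
    intro S
    unfold unionPush
    apply Finset.sum_nonneg; intro T _
    apply Finset.sum_nonneg; intro U _
    split
    · exact mul_nonneg (hnn T) (hnn U)
    · exact le_rfl
  have husum : ∑ S, unionPush n μ S = 1 := by
    unfold unionPush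
    rw [Finset.sum_comm]
    have : ∀ T : Finset (Fin n),
        (∑ S : Finset (Fin n), ∑ U : Finset (Fin n), if T ∪ U = S then μ T * μ U else 0)
        = ∑ U : Finset (Fin n), μ T * μ U := by
      intro T
      rw [Finset.sum_comm]
      congr 1; ext U
      simp
    rw [Finset.sum_congr rfl (fun T _ => this T)]
    rw [← Finset.sum_mul_sum, hsum]
    norm_num
  have husupp : ∀ S ∉ F, unionPush n μ S = 0 := by
    intro S hS
    unfold unionPush
    apply Finset.sum_eq_zero; intro T _
    apply Finset.sum_eq_zero; intro U _
    split
    · rename_i hTU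
      by_cases hT : T ∈ F
      · by_cases hU : U ∈ F
        · exact absurd (hTU ▸ hUC T hT U hU) hS
        · simp [hμ, hU]
      · simp [hμ, hT]
    · rfl
  have hle := max_ent F hFne (unionPush n μ) hunn husum husupp
  have hspec := h μ hnn hsum hmarg
  rw [hentμ] at hspec
  have hLpos : 0 < Real.logb 2 N := Real.logb_pos one_lt_two (by linarith)
  nlinarith
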